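/- Every finite tree has an independent coloring that is a fixed point of the minority process, and it has a non-independent fixed point of the minority process if and only if it has at least two inner (non-leaf) nodes. -/

import Mathlib

open SimpleGraph Finset
open scoped Classical

variable {V : Type*}

/-- Number of neighbors of `v` with the same color as `v`. -/
noncomputable def sameCount (G : SimpleGraph V) [Fintype V] (c : V → Bool) (v : V) : ℕ :=
  ((G.neighborFinset v).filter fun u => c u = c v).card

/-- Number of neighbors of `v` with the opposite color. -/
noncomputable def diffCount (G : SimpleGraph V) [Fintype V] (c : V → Bool) (v : V) : ℕ :=
  ((G.neighborFinset v).filter fun u => c u ≠ c v).card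

/-- One round of the minority process. -/
noncomputable def minStep (G : SimpleGraph V) [Fintype V] (c : V → Bool) : V → Bool :=
  fun v => if sameCount G c v ≤ diffCount G c v then c v else !c v

/-- One round of the majority process. -/
noncomputable def majStep (G : SimpleGraph V) [Fintype V] (c : V → Bool) : V → Bool :=
  fun v => if diffCount G c v ≤ sameCount G c v then c v else !c v

/-- Number of edges of `F` incident to `v`. -/
noncomputable def incCount (F : Finset (Sym2 V)) (v : V) : ℕ :=
  (F.filter fun e => v ∈ e).card

/-- The monochromatic edges of a coloring. -/
noncomputable def monoEdges (G : SimpleGraph V) [Fintype V] (c : V → Bool) : Finset (Sym2 V) :=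
  G.edgeFinset.filter fun e => ∀ x ∈ e, ∀ y ∈ e, c x = c y

/-- The multichromatic edges of a coloring. -/
noncomputable def multiEdges (G : SimpleGraph V) [Fintype V] (c : V → Bool) : Finset (Sym2 V) :=
  G.edgeFinset.filter fun e => ∃ x ∈ e, ∃ y ∈ e, c x ≠ c y

section Aux

variable {G : SimpleGraph V}

private lemma split_le {a b c : V} (p : G.Walk a b) (hc : c ∈ p.support) :
    G.dist a c + G.dist c b ≤ p.length := by
  have h1 : G.dist a c ≤ (p.takeUntil c hc).length := SimpleGraph.dist_le _
  have h2 : G.dist c b ≤ (p.dropUntil c hc).length := SimpleGraph.dist_le _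
  have h3 : (p.takeUntil c hc).length + (p.dropUntil c hc).length = p.length := by
    rw [← SimpleGraph.Walk.length_append, SimpleGraph.Walk.take_spec]
  omega

private lemma concat_path {x y z : V} {p : G.Walk x y} (hp : p.IsPath) (h : G.Adj y z)
    (hz : z ∉ p.support) : (p.concat h).IsPath := by
  rw [← SimpleGraph.Walk.isPath_reverse_iff, SimpleGraph.Walk.reverse_concat]
  exact hp.reverse.cons (by simpa [SimpleGraph.Walk.support_reverse] using hz)

private lemma adj_dist_step (hT : G.IsTree) {r x y : V} (h : G.Adj x y) :
    G.dist r y = G.dist r x + 1 ∨ G.dist r x = G.dist r y + 1 := by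
  have key : ∀ {a b : V}, G.Adj a b → G.dist r a ≤ G.dist r b →
      G.dist r b = G.dist r a + 1 := by
    intro a b hab hle
    have htri : G.dist r b ≤ G.dist r a + G.dist a b := hT.isConnected.dist_triangle
    have hab1 : G.dist a b = 1 := SimpleGraph.dist_eq_one_iff_adj.mpr hab
    rcases Nat.lt_or_ge (G.dist r b) (G.dist r a + 1) with hlt | hge
    · exfalso
      have heq : G.dist r b = G.dist r a := le_antisymm (by omega) hle
      obtain ⟨p, hpp, hpl⟩ := (hT.isConnected.preconnected r a).exists_path_of_dist
      have hb : b ∉ p.support := by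
        intro hb
        have h1 := split_le p hb
        have h2 : G.dist b a = 1 := SimpleGraph.dist_eq_one_iff_adj.mpr hab.symm
        omega
      obtain ⟨q, hqp, hql⟩ := (hT.isConnected.preconnected r b).exists_path_of_dist
      have huniq := hT.IsAcyclic.path_unique ⟨p.concat hab, concat_path hpp hab hb⟩ ⟨q, hqp⟩
      have hlen : (p.concat hab).length = q.length := by
        simpa using congrArg (fun P : G.Path r b => P.1.length) huniq
      rw [SimpleGraph.Walk.length_concat] at hlen
      omega
    · omega
  rcases le_total (G.dist r x) (G.dist r y) with hle | hle
  · exact Or.inl (key h hle)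
  · exact Or.inr (key h.symm hle)

private lemma tree_dist_zero_eq (hT : G.IsTree) {x y : V} (h : G.dist x y = 0) : x = y := by
  rcases SimpleGraph.dist_eq_zero_iff_eq_or_not_reachable.mp h with h' | h'
  · exact h'
  · exact absurd (hT.isConnected.preconnected x y) h'

private lemma cross_eq (hT : G.IsTree) {u w x y : V} (hA : G.Adj u w) (hxy : G.Adj x y)
    (hx : G.dist u x + 1 = G.dist w x) (hy : G.dist w y + 1 = G.dist u y) :
    x = u ∧ y = w := by
  have hconn := hT.isConnected
  have huw : G.dist u w = 1 := SimpleGraph.dist_eq_one_iff_adj.mpr hA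
  have hwu : G.dist w u = 1 := by rw [SimpleGraph.dist_comm]; exact huw
  have hcases := adj_dist_step hT (r := u) hxy
  rcases Nat.eq_zero_or_pos (G.dist u x) with hk0 | hkpos
  · have hxu : x = u := (tree_dist_zero_eq hT hk0).symm
    subst hxu
    have huy : G.dist x y = 1 := SimpleGraph.dist_eq_one_iff_adj.mpr hxy
    have hwy0 : G.dist w y = 0 := by omega
    exact ⟨rfl, (tree_dist_zero_eq hT hwy0).symm⟩
  · exfalso
    rcases hcases with hcase | hcase
    · -- dist u y = dist u x + 1
      have hwyk : G.dist w y = G.dist u x := by omega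
      obtain ⟨p, hpp, hpl⟩ := (hconn.preconnected u x).exists_path_of_dist
      have hynp : y ∉ p.support := by
        intro hmem
        have h1 := split_le p hmem
        have h2 : G.dist y x = 1 := SimpleGraph.dist_eq_one_iff_adj.mpr hxy.symm
        omega
      obtain ⟨q, hqp, hql⟩ := (hconn.preconnected w y).exists_path_of_dist
      have hunq : u ∉ q.support := by
        intro hmem
        have h1 := split_le q hmem
        omega
      have huniq := hT.IsAcyclic.path_unique
        ⟨p.concat hxy, concat_path hpp hxy hynp⟩
        ⟨SimpleGraph.Walk.cons hA q, hqp.cons hunq⟩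
      have hwalks : p.concat hxy = SimpleGraph.Walk.cons hA q :=
        congrArg Subtype.val huniq
      have hws : w ∈ (p.concat hxy).support := by
        rw [hwalks, SimpleGraph.Walk.support_cons]
        exact List.mem_cons_of_mem _ q.start_mem_support
      rw [SimpleGraph.Walk.support_concat] at hws
      rcases List.mem_append.mp hws with hmem | hmem
      · have h1 := split_le p hmem
        omega
      · have hyw : w = y := List.mem_singleton.mp hmem
        subst hyw
        rw [SimpleGraph.dist_self] at hwyk
        omega
    · -- dist u x = dist u y + 1
      have htri : G.dist w x ≤ G.dist w y + G.dist y x := hconn.dist_triangle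
      have h2 : G.dist y x = 1 := SimpleGraph.dist_eq_one_iff_adj.mpr hxy.symm
      omega

private lemma exists_adj_inner [Fintype V] {G : SimpleGraph V} :
    ∀ {u w : V} (p : G.Walk u w), p.IsPath → u ≠ w → 2 ≤ G.degree u → 2 ≤ G.degree w →
      ∃ a b : V, G.Adj a b ∧ 2 ≤ G.degree a ∧ 2 ≤ G.degree b := by
  intro u w p
  induction p with
  | nil => intro _ hne _ _; exact absurd rfl hne
  | @cons u b w h q ih =>
    intro hp hne hu hw
    rw [SimpleGraph.Walk.cons_isPath_iff] at hp
    obtain ⟨hq, hus⟩ := hp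
    by_cases hbw : b = w
    · subst hbw; exact ⟨u, b, h, hu, hw⟩
    · cases q with
      | nil => exact absurd rfl hbw
      | @cons b d w h2 q2 =>
        have hd : d ∈ (SimpleGraph.Walk.cons h2 q2).support := by
          rw [SimpleGraph.Walk.support_cons]
          exact List.mem_cons_of_mem _ q2.start_mem_support
        have hud : u ≠ d := fun he => hus (he ▸ hd)
        have hdb : 2 ≤ G.degree b := by
          have hsub : ({u, d} : Finset V) ⊆ G.neighborFinset b := by
            intro a ha
            rcases Finset.mem_insert.mp ha with rfl | ha
            · rw [SimpleGraph.mem_neighborFinset]; exact h.symm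
            · rw [Finset.mem_singleton] at ha
              subst ha
              rw [SimpleGraph.mem_neighborFinset]; exact h2
          calc 2 = ({u, d} : Finset V).card := (Finset.card_pair hud).symm
            _ ≤ (G.neighborFinset b).card := Finset.card_le_card hsub
            _ = G.degree b := rfl
        exact ih hq hbw hdb hw

private lemma minStep_fixed [Fintype V] {G : SimpleGraph V} {c : V → Bool}
    (h : ∀ v, sameCount G c v ≤ diffCount G c v) : minStep G c = c :=
  funext fun v => if_pos (h v)

private lemma sameCount_eq_zero [Fintype V] {G : SimpleGraph V} {c : V → Bool} {v : V}
    (h : ∀ a, G.Adj v a → ¬ c a = c v) : sameCount G c v = 0 := by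
  unfold sameCount
  rw [Finset.card_eq_zero, Finset.filter_eq_empty_iff]
  intro a ha
  rw [SimpleGraph.mem_neighborFinset] at ha
  exact h a ha

private lemma degree_eq_same_add_diff [Fintype V] (G : SimpleGraph V) (c : V → Bool) (v : V) :
    G.degree v = sameCount G c v + diffCount G c v := by
  unfold sameCount diffCount
  rw [← SimpleGraph.card_neighborFinset_eq_degree]
  exact (Finset.card_filter_add_card_filter_not
    (s := G.neighborFinset v) (p := fun u => c u = c v)).symm

end Aux

theorem stmt5 [Fintype V] (G : SimpleGraph V) (hT : G.IsTree) :
    (∃ c : V → Bool, minStep G c = c ∧ ∀ u w, G.Adj u w → c u ≠ c w) ∧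
    ((∃ c : V → Bool, minStep G c = c ∧ ¬ (∀ u w, G.Adj u w → c u ≠ c w)) ↔
      ∃ u w : V, u ≠ w ∧ 2 ≤ G.degree u ∧ 2 ≤ G.degree w) := by
  have hconn := hT.isConnected
  constructor
  · -- proper coloring by distance parity from a root
    have : Nonempty V := hconn.nonempty
    obtain ⟨r⟩ := this
    refine ⟨fun v => Nat.bodd (G.dist r v), ?_, ?_⟩
    · apply minStep_fixed
      intro v
      have h0 : sameCount G (fun v => Nat.bodd (G.dist r v)) v = 0 := by
        apply sameCount_eq_zero
        intro a ha hc
        rcases adj_dist_step hT (r := r) ha with h | h <;> simp [h, Nat.bodd_succ] at hc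
      rw [h0]
      exact Nat.zero_le _
    · intro x y hxy hc
      rcases adj_dist_step hT (r := r) hxy with h | h <;> simp [h, Nat.bodd_succ] at hc
  · constructor
    · -- forward: a non-independent fixed point gives two inner nodes
      rintro ⟨c, hfix, hni⟩
      push_neg at hni
      obtain ⟨u, w, hA, hc⟩ := hni
      have key : ∀ {a b : V}, G.Adj a b → c a = c b → 2 ≤ G.degree a := by
        intro a b hab hcab
        have h1 : 1 ≤ sameCount G c a := by
          apply Finset.card_pos.mpr
          refine ⟨b, Finset.mem_filter.mpr ⟨?_, hcab.symm⟩⟩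
          rw [SimpleGraph.mem_neighborFinset]; exact hab
        have h2 : sameCount G c a ≤ diffCount G c a := by
          by_contra hle
          have := congrFun hfix a
          unfold minStep at this
          rw [if_neg hle] at this
          exact (Bool.not_ne_self (c a)) this
        have h3 := degree_eq_same_add_diff G c a
        omega
      exact ⟨u, w, hA.ne, key hA hc, key hA.symm hc.symm⟩
    · -- backward: two inner nodes give a non-independent fixed point
      rintro ⟨u₀, w₀, hne, hu₀, hw₀⟩
      obtain ⟨p, hpp, -⟩ := (hconn.preconnected u₀ w₀).exists_path_of_dist
      obtain ⟨u, w, hA, hu, hw⟩ := exists_adj_inner p hpp hne hu₀ hw₀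
      -- the coloring
      set c : V → Bool := fun v => Nat.bodd (min (G.dist u v) (G.dist w v)) with hcdef
      have huw1 : G.dist u w = 1 := SimpleGraph.dist_eq_one_iff_adj.mpr hA
      have hwu1 : G.dist w u = 1 := by rw [SimpleGraph.dist_comm]; exact huw1
      have side : ∀ v : V, G.dist u v + 1 = G.dist w v ∨ G.dist w v + 1 = G.dist u v := by
        intro v
        have e1 : G.dist u v = G.dist v u := SimpleGraph.dist_comm
        have e2 : G.dist w v = G.dist v w := SimpleGraph.dist_comm
        rcases adj_dist_step hT (r := v) hA with h | h
        · left; omega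
        · right; omega
      have hcu : c u = false := by
        rw [hcdef]
        simp [SimpleGraph.dist_self]
      have hcw : c w = false := by
        rw [hcdef]
        simp [SimpleGraph.dist_self, huw1]
      -- monochromatic edges are only the uw edge
      have mono : ∀ x y : V, G.Adj x y → c x = c y →
          (x = u ∧ y = w) ∨ (x = w ∧ y = u) := by
        intro x y hxy hc
        rcases side x with hx | hx <;> rcases side y with hy | hy
        · -- both on u side
          exfalso
          have hcx : c x = Nat.bodd (G.dist u x) := by
            rw [hcdef]; simp only []
            rw [min_eq_left (by omega)]
          have hcy : c y = Nat.bodd (G.dist u y) := by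
            rw [hcdef]; simp only []
            rw [min_eq_left (by omega)]
          rw [hcx, hcy] at hc
          rcases adj_dist_step hT (r := u) hxy with h | h <;>
            simp [h, Nat.bodd_succ] at hc
        · exact Or.inl (cross_eq hT hA hxy hx hy)
        · exact Or.inr (cross_eq hT hA.symm hxy hx hy)
        · -- both on w side
          exfalso
          have hcx : c x = Nat.bodd (G.dist w x) := by
            rw [hcdef]; simp only []
            rw [min_eq_right (by omega)]
          have hcy : c y = Nat.bodd (G.dist w y) := by
            rw [hcdef]; simp only []
            rw [min_eq_right (by omega)]
          rw [hcx, hcy] at hc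
          rcases adj_dist_step hT (r := w) hxy with h | h <;>
            simp [h, Nat.bodd_succ] at hc
      -- fixed point at an endpoint of the special edge
      have endpoint : ∀ a b : V, G.Adj a b → 2 ≤ G.degree a → c a = c b →
          (∀ x : V, G.Adj a x → c x = c a → x = b) →
          sameCount G c a ≤ diffCount G c a := by
        intro a b hab hdeg hcab huniq
        have h1 : sameCount G c a ≤ 1 := by
          have hsub : (G.neighborFinset a).filter (fun x => c x = c a) ⊆ {b} := by
            intro x hx
            rw [Finset.mem_filter, SimpleGraph.mem_neighborFinset] at hx
            rw [Finset.mem_singleton]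
            exact huniq x hx.1 hx.2
          calc sameCount G c a ≤ ({b} : Finset V).card := Finset.card_le_card hsub
            _ = 1 := Finset.card_singleton b
        have h2 : 1 ≤ diffCount G c a := by
          have hex : ∃ x ∈ G.neighborFinset a, x ≠ b := by
            by_contra hcon
            push_neg at hcon
            have hsub : G.neighborFinset a ⊆ {b} := fun x hx =>
              Finset.mem_singleton.mpr (hcon x hx)
            have hle := Finset.card_le_card hsub
            rw [Finset.card_singleton] at hle
            have : G.degree a ≤ 1 := hle
            omega
          obtain ⟨x, hx, hxb⟩ := hex
          apply Finset.card_pos.mpr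
          refine ⟨x, Finset.mem_filter.mpr ⟨hx, ?_⟩⟩
          intro hcx
          rw [SimpleGraph.mem_neighborFinset] at hx
          exact hxb (huniq x hx hcx)
        omega
      refine ⟨c, ?_, ?_⟩
      · apply minStep_fixed
        intro v
        by_cases hvu : v = u
        · subst hvu
          apply endpoint v w hA hu (by rw [hcu, hcw])
          intro x hx hcx
          rcases mono v x hx hcx.symm with h | h
          · exact h.2
          · exact absurd h.1 hA.ne
        · by_cases hvw : v = w
          · subst hvw
            apply endpoint v u hA.symm hw (by rw [hcu, hcw])
            intro x hx hcx
            rcases mono v x hx hcx.symm with h | h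
            · exact absurd h.1 hA.ne.symm
            · exact h.2
          · have h0 : sameCount G c v = 0 := by
              apply sameCount_eq_zero
              intro a ha hc
              rcases mono v a ha hc.symm with h | h
              · exact hvu h.1
              · exact hvw h.1
            rw [h0]
            exact Nat.zero_le _
      · intro hcon
        exact hcon u w hA (by rw [hcu, hcw])
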